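/- In an admissible triangle T of order n, if x_j appears in row d immediately below-left of b_{jk'} in row d−1, then after raising (or before lowering), a configuration of b_{jk} in row d with x_j immediately above-right cannot arise except from such a swap; formally: in the raised triangle R_d(T), every configuration consisting of x_j in row d−1 directly above-right of b_{jk} in row d arose from swapping b_{jk} and x_j, because the alternative source configuration (a_{jk} in row d−1 above y_k in row d) violates the monotone diagonal property. -/

import Mathlib

open Finset
open scoped Classical

/-- Symbols occurring in a triangle: `x i`, `y i` (indices `1,...,n` encoded by `Fin n`),
`a i j`, `b i j` (the edge `{i+1,j+1}` oriented from smaller to larger, resp. larger to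
smaller), and the numbers `1,...,n` of the bottom row. -/
inductive TSym (n : ℕ) where
  | x (i : Fin n)
  | y (i : Fin n)
  | a (i j : Fin n)
  | b (i j : Fin n)
  | num (i : Fin n)
deriving DecidableEq

/-- A triangle of order `n`: row `r` (0-indexed) has `r+1` entries. -/
def Tri (n : ℕ) := ∀ r : Fin n, Fin (r.val + 1) → TSym n

namespace TSym

variable {n : ℕ}

/-- The symbol lies in `𝒳`. -/
def isX : TSym n → Prop
  | .x _ => True
  | .y _ => True
  | _ => False

/-- The symbol lies in `𝒱_k`. -/
def isV (k : ℕ) : TSym n → Prop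
  | .a i j => j.val = i.val + k ∧ 0 < k
  | .b i j => j.val = i.val + k ∧ 0 < k
  | _ => False

/-- Well-formedness of a non-bottom entry: `a i j` and `b i j` require `i < j`;
numbers may not occur. -/
def wf : TSym n → Prop
  | .a i j => i < j
  | .b i j => i < j
  | .num _ => False
  | _ => True

/-- The left value of a symbol lying in a row of rank `t` (values are `1`-based). -/
def lval (t : ℕ) : TSym n → ℤ
  | .x i => (i.val : ℤ) + 1
  | .y j => (j.val : ℤ) + 1 - t
  | .a i _ => (i.val : ℤ) + 1
  | .b i _ => (i.val : ℤ) + 1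
  | .num i => (i.val : ℤ) + 1

/-- The right value of a symbol lying in a row of rank `t`. -/
def rval (t : ℕ) : TSym n → ℤ
  | .x i => (i.val : ℤ) + 1 + t
  | .y j => (j.val : ℤ) + 1
  | .a _ j => (j.val : ℤ) + 1
  | .b _ j => (j.val : ℤ) + 1
  | .num i => (i.val : ℤ) + 1

end TSym

variable {n : ℕ}

/-- Row `r` is an `𝒳`-row. -/
def IsXRow (t : Tri n) (r : Fin n) : Prop := ∀ i, (t r i).isX

/-- Row `r` has all entries in `𝒱_k`. -/
def IsVRowOf (t : Tri n) (r : Fin n) (k : ℕ) : Prop := ∀ i, (t r i).isV k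

/-- Row `r` is a `𝒱`-row. -/
def IsVRow (t : Tri n) (r : Fin n) : Prop := ∃ k, IsVRowOf t r k

/-- The bottom row is `(1,2,...,n)`. -/
def BottomOK (t : Tri n) : Prop :=
  ∀ (r : Fin n), r.val = n - 1 → ∀ i : Fin (r.val + 1),
    t r i = .num ⟨i.val, by have := i.isLt; have := r.isLt; omega⟩

/-- All non-bottom entries are well-formed. -/
def WellFormed (t : Tri n) : Prop :=
  ∀ r : Fin n, r.val < n - 1 → ∀ i, (t r i).wf

/-- `rk m` is the rank of (1-based) row `m`, for `0 ≤ m ≤ n`; Lean row index `r`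
corresponds to row `r+1`.  An admissible ranking: the bottom row has rank `0`,
row `n-1` has rank `1`, and going up, an `𝒳`-row keeps the rank while a row whose
entries lie in `𝒱_k` has rank `k` and raises the rank above it to `k+1`. -/
def IsRanking (t : Tri n) (rk : ℕ → ℕ) : Prop :=
  rk n = 0 ∧ (1 ≤ n → rk (n - 1) = 1) ∧
  ∀ r : Fin n, r.val < n - 1 →
    (IsXRow t r ∧ rk r.val = rk (r.val + 1)) ∨
    (IsVRowOf t r (rk (r.val + 1)) ∧ rk r.val = rk (r.val + 1) + 1)

/-- The monotone diagonal and monotone row properties: for every local arrangement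
`v` directly above consecutive entries `u, w`, we require `l(u) ≤ l(v)` (strict when
`u` is a `y`), `r(v) ≤ r(w)` (strict when `w` is an `x`), and `l(u) < l(w)`. -/
def MonoProps (t : Tri n) (rk : ℕ → ℕ) : Prop :=
  ∀ (r : Fin n) (hr : 1 ≤ r.val) (p : ℕ) (hp : p + 1 < r.val + 1),
    let u := t r ⟨p, by omega⟩
    let w := t r ⟨p + 1, by omega⟩
    let v := t ⟨r.val - 1, by have := r.isLt; omega⟩ ⟨p, by simp only [Fin.val_mk]; omega⟩
    (u.lval (rk (r.val + 1)) ≤ v.lval (rk r.val)) ∧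
    ((∃ j, u = .y j) → u.lval (rk (r.val + 1)) < v.lval (rk r.val)) ∧
    (v.rval (rk r.val) ≤ w.rval (rk (r.val + 1))) ∧
    ((∃ j, w = .x j) → v.rval (rk r.val) < w.rval (rk (r.val + 1))) ∧
    (u.lval (rk (r.val + 1)) < w.lval (rk (r.val + 1)))

/-- Admissibility of a triangle. -/
def IsAdmissible (t : Tri n) : Prop :=
  BottomOK t ∧ WellFormed t ∧ ∃ rk, IsRanking t rk ∧ MonoProps t rk

/-- The rank of the row with Lean index `r` (i.e. of row `r+1`), computed directly:
one more than the number of `𝒱`-rows strictly below it (above the bottom row). -/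
noncomputable def rankOf (t : Tri n) (r : ℕ) : ℕ :=
  1 + ((univ : Finset (Fin n)).filter fun s => r < s.val ∧ IsVRow t s).card

open MvPolynomial in
/-- The weight of a symbol. -/
noncomputable def TSym.weight : TSym n → MvPolynomial (Fin n ⊕ Fin n) ℤ
  | .x i => X (Sum.inl i)
  | .y j => X (Sum.inr j)
  | .a i _ => X (Sum.inl i)
  | .b _ j => X (Sum.inr j)
  | .num _ => 1

/-- The weight of a triangle: the product of the weights of its non-bottom entries. -/
noncomputable def weight (t : Tri n) : MvPolynomial (Fin n ⊕ Fin n) ℤ :=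
  ∏ r : Fin n, if r.val < n - 1 then ∏ i, (t r i).weight else 1

/-- The raising operator `R_d` (`1 ≤ d < n`), acting on (paper-indexed) rows `d-1`
and `d`, i.e. Lean rows `d-2` and `d-1`. -/
noncomputable def Raise (d : ℕ) (t : Tri n) : Tri n := fun r i =>
  if hu : 2 ≤ d ∧ r.val + 2 = d ∧ r.val + 1 < n then
    -- row d-1: swap with the entry diagonally below, else convert to an 𝒳-symbol
    match t r i with
    | .b j k =>
        if t ⟨r.val + 1, hu.2.2⟩ ⟨i.val, by have := i.isLt; simp only [Fin.val_mk]; omega⟩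
            = .x j then .x j else .y k
    | .a j k =>
        if t ⟨r.val + 1, hu.2.2⟩ ⟨i.val + 1, by have := i.isLt; simp only [Fin.val_mk]; omega⟩
            = .y k then .y k else .x j
    | s => s
  else if hl : r.val + 1 = d then
    -- row d: swap with the entry diagonally above, else convert to a 𝒱-symbol
    let tk := rankOf t r.val
    match t r i with
    | .x j =>
        if hi : i.val < r.val then
          match t ⟨r.val - 1, by have := r.isLt; omega⟩
              ⟨i.val, by simp only [Fin.val_mk]; omega⟩ with
          | .b j' k => if j' = j then .b j' k
              else if h2 : j.val + tk < n then .a j ⟨j.val + tk, h2⟩ else .x j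
          | _ => if h2 : j.val + tk < n then .a j ⟨j.val + tk, h2⟩ else .x j
        else if h2 : j.val + tk < n then .a j ⟨j.val + tk, h2⟩ else .x j
    | .y k =>
        if hi : 1 ≤ i.val then
          match t ⟨r.val - 1, by have := r.isLt; omega⟩
              ⟨i.val - 1, by have := i.isLt; simp only [Fin.val_mk]; omega⟩ with
          | .a j k' => if k' = k then .a j k'
              else if h2 : tk ≤ k.val then .b ⟨k.val - tk, by have := k.isLt; omega⟩ k
              else .y k
          | _ => if h2 : tk ≤ k.val then .b ⟨k.val - tk, by have := k.isLt; omega⟩ k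
              else .y k
        else if h2 : tk ≤ k.val then .b ⟨k.val - tk, by have := k.isLt; omega⟩ k else .y k
    | s => s
  else t r i

/-- The lowering operator `L_d` (`1 ≤ d < n`), inverse to `R_d`. -/
noncomputable def Lower (d : ℕ) (t : Tri n) : Tri n := fun r i =>
  if hu : 2 ≤ d ∧ r.val + 2 = d ∧ r.val + 1 < n then
    -- row d-1: swap with the entry diagonally below, else convert to a 𝒱-symbol
    let tk := rankOf t (r.val + 1)
    match t r i with
    | .x j =>
        (match t ⟨r.val + 1, hu.2.2⟩ ⟨i.val, by have := i.isLt; simp only [Fin.val_mk]; omega⟩ with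
          | .b j' k => if j' = j then .b j' k
              else if h2 : j.val + tk < n then .a j ⟨j.val + tk, h2⟩ else .x j
          | _ => if h2 : j.val + tk < n then .a j ⟨j.val + tk, h2⟩ else .x j)
    | .y k =>
        (match t ⟨r.val + 1, hu.2.2⟩
            ⟨i.val + 1, by have := i.isLt; simp only [Fin.val_mk]; omega⟩ with
          | .a j k' => if k' = k then .a j k'
              else if h2 : tk ≤ k.val then .b ⟨k.val - tk, by have := k.isLt; omega⟩ k
              else .y k
          | _ => if h2 : tk ≤ k.val then .b ⟨k.val - tk, by have := k.isLt; omega⟩ k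
              else .y k)
    | s => s
  else if hl : r.val + 1 = d then
    -- row d: swap with the entry diagonally above, else convert to an 𝒳-symbol
    match t r i with
    | .b j k =>
        if hi : i.val < r.val then
          (if t ⟨r.val - 1, by have := r.isLt; omega⟩
              ⟨i.val, by simp only [Fin.val_mk]; omega⟩ = .x j then .x j else .y k)
        else .y k
    | .a j k =>
        if hi : 1 ≤ i.val then
          (if t ⟨r.val - 1, by have := r.isLt; omega⟩
              ⟨i.val - 1, by have := i.isLt; simp only [Fin.val_mk]; omega⟩ = .y k
           then .y k else .x j)
        else .x j
    | s => s
  else t r i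

lemma TSym.isV_not_isX {s : TSym n} {k : ℕ} (h : s.isV k) (h2 : s.isX) : False := by
  cases s <;> simp_all [TSym.isV, TSym.isX]

lemma bottom_not_V (t : Tri n) (hb : BottomOK t) (s : Fin n) (hs : s.val = n - 1) :
    ¬ IsVRow t s := by
  rintro ⟨k, hk⟩
  have h0 := hk ⟨0, by omega⟩
  rw [hb s hs ⟨0, by omega⟩] at h0
  simp [TSym.isV] at h0

lemma filter_step (t : Tri n) (r : ℕ) (hr : r + 1 < n) :
    ((univ : Finset (Fin n)).filter fun s => r < s.val ∧ IsVRow t s).card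
      = ((univ : Finset (Fin n)).filter fun s => r + 1 < s.val ∧ IsVRow t s).card
        + if IsVRow t ⟨r + 1, hr⟩ then 1 else 0 := by
  by_cases h : IsVRow t ⟨r + 1, hr⟩
  · rw [if_pos h]
    have he : ((univ : Finset (Fin n)).filter fun s => r < s.val ∧ IsVRow t s)
        = insert ⟨r + 1, hr⟩
            ((univ : Finset (Fin n)).filter fun s => r + 1 < s.val ∧ IsVRow t s) := by
      ext s
      simp only [mem_filter, mem_univ, true_and, mem_insert]
      constructor
      · rintro ⟨h1, h2⟩
        rcases Nat.lt_or_ge (r + 1) s.val with h3 | h3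
        · exact Or.inr ⟨h3, h2⟩
        · exact Or.inl (Fin.ext (show s.val = r + 1 by omega))
      · rintro (rfl | ⟨h1, h2⟩)
        · exact ⟨by simp, h⟩
        · exact ⟨by omega, h2⟩
    rw [he, card_insert_of_notMem (by simp [mem_filter])]
  · rw [if_neg h, add_zero]
    congr 1
    ext s
    simp only [mem_filter, mem_univ, true_and]
    constructor
    · rintro ⟨h1, h2⟩
      refine ⟨?_, h2⟩
      rcases Nat.lt_or_ge (r + 1) s.val with h3 | h3
      · exact h3
      · exact absurd ((Fin.ext (show s.val = r + 1 by omega) : s = ⟨r + 1, hr⟩) ▸ h2) h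
    · rintro ⟨h1, h2⟩
      exact ⟨by omega, h2⟩

lemma rankOf_eq_rank (t : Tri n) (rk : ℕ → ℕ) (hb : BottomOK t) (hrk : IsRanking t rk) :
    ∀ m r, r + m + 2 = n → rk (r + 1) = rankOf t r := by
  intro m
  induction m with
  | zero =>
    intro r hrn
    have h1 : rk (r + 1) = 1 := by
      have := hrk.2.1 (by omega)
      rwa [show n - 1 = r + 1 by omega] at this
    have h2 : ((univ : Finset (Fin n)).filter fun s => r < s.val ∧ IsVRow t s) = ∅ := by
      rw [filter_eq_empty_iff]
      rintro s - ⟨hlt, hV⟩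
      exact bottom_not_V t hb s (by omega) hV
    rw [rankOf, h2, card_empty, h1]
  | succ m ih =>
    intro r hrn
    have hlt : r + 1 < n := by omega
    have key := filter_step t r hlt
    have ih' := ih (r + 1) (by omega)
    rcases hrk.2.2 ⟨r + 1, hlt⟩ (by simp only [Fin.val_mk]; omega) with h | h
    · have hnV : ¬ IsVRow t ⟨r + 1, hlt⟩ := by
        rintro ⟨k, hk⟩
        exact TSym.isV_not_isX (hk ⟨0, by omega⟩) (h.1 ⟨0, by omega⟩)
      rw [if_neg hnV, add_zero] at key
      have h2 : rk (r + 1) = rk (r + 2) := h.2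
      rw [h2, ih', rankOf, rankOf, key]
    · have hV : IsVRow t ⟨r + 1, hlt⟩ := ⟨_, h.1⟩
      rw [if_pos hV] at key
      have h2 : rk (r + 1) = rk (r + 2) + 1 := h.2
      rw [h2, ih', rankOf, rankOf, key]
      omega

/-- In the raised triangle `R_d(T)`, a configuration of `x_j` in (paper) row `d-1`
directly above-right of `b_{jk}` in row `d` can only arise from the swap of these two
entries (the alternative source, `a_{jk}` above `y_k`, is excluded by the monotone
diagonal property of `T`). -/
theorem stmt16 (n d : ℕ) (t : Tri n) (h1 : 1 ≤ d) (h2 : d < n) (h3 : 2 ≤ d)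
    (hadm : IsAdmissible t)
    (hX : IsXRow t ⟨d - 1, by omega⟩)
    (hV : IsVRow t ⟨d - 2, by omega⟩)
    (p : ℕ) (hp : p < d - 1) (j k : Fin n)
    (hxj : Raise d t ⟨d - 2, by omega⟩ ⟨p, by simp only [Fin.val_mk]; omega⟩ = .x j)
    (hbk : Raise d t ⟨d - 1, by omega⟩ ⟨p, by simp only [Fin.val_mk]; omega⟩ = .b j k) :
    t ⟨d - 2, by omega⟩ ⟨p, by simp only [Fin.val_mk]; omega⟩ = .b j k ∧
    t ⟨d - 1, by omega⟩ ⟨p, by simp only [Fin.val_mk]; omega⟩ = .x j := by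
  obtain ⟨hb, hwf, rk, hrk, hmono⟩ := hadm
  obtain ⟨e, rfl⟩ : ∃ e, d = e + 2 := ⟨d - 2, by omega⟩
  have he : e < n := by omega
  have he1 : e + 1 < n := by omega
  have hip : p < (⟨e, he⟩ : Fin n).val + 1 := by show p < e + 1; omega
  have hip2 : p < (⟨e + 1, he1⟩ : Fin n).val + 1 := by show p < e + 2; omega
  have hrank : rankOf t (e + 1) = rk (e + 2) :=
    (rankOf_eq_rank t rk hb hrk (n - (e + 3)) (e + 1) (by omega)).symm
  obtain ⟨kv, hkv⟩ := hV
  have hvp : TSym.isV kv (t ⟨e, he⟩ ⟨p, hip⟩) := hkv ⟨p, hip⟩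
  have hxp : TSym.isX (t ⟨e + 1, he1⟩ ⟨p, hip2⟩) := hX ⟨p, hip2⟩
  have hxj' : Raise (e + 2) t ⟨e, he⟩ ⟨p, hip⟩ = .x j := hxj
  have hbk' : Raise (e + 2) t ⟨e + 1, he1⟩ ⟨p, hip2⟩ = .b j k := hbk
  clear hxj hbk
  refine (?_ : t ⟨e, he⟩ ⟨p, hip⟩ = .b j k ∧ t ⟨e + 1, he1⟩ ⟨p, hip2⟩ = .x j)
  simp only [Raise] at hxj' hbk'
  rw [dif_pos (show 2 ≤ e + 2 ∧ True ∧ e + 1 < n from ⟨by omega, trivial, he1⟩)] at hxj'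
  rw [dif_neg (show ¬(2 ≤ e + 2 ∧ e + 1 + 2 = e + 2 ∧ e + 1 + 1 < n) from fun hc => by omega),
     dif_pos (trivial : True)] at hbk'
  split at hxj'
  · -- t(e,p) = .b jb kb
    rename_i jb kb heq
    split at hxj'
    · -- t(e+1,p) = .x jb
      rename_i hc
      have hjj : j = jb := (TSym.x.inj hxj').symm
      subst hjj
      have hc' : t ⟨e + 1, he1⟩ ⟨p, hip2⟩ = TSym.x j := hc
      refine ⟨?_, hc'⟩
      split at hbk'
      · -- outer match of hbk' : x-arm
        rename_i jx heqx
        have heqx' : t ⟨e + 1, he1⟩ ⟨p, hip2⟩ = TSym.x jx := heqx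
        rw [hc'] at heqx'
        have hjx : j = jx := TSym.x.inj heqx'
        subst hjx
        split at hbk'
        · split at hbk'
          · rename_i j' k' heq2
            have heq2' : t ⟨e, he⟩ ⟨p, hip⟩ = TSym.b j' k' := heq2
            rw [heq] at heq2'
            obtain ⟨hj', hk'⟩ := TSym.b.inj heq2'
            subst hj'; subst hk'
            rw [if_pos rfl] at hbk'
            obtain rfl := (TSym.b.inj hbk').2
            exact heq
          · split at hbk'
            · exact nomatch hbk'
            · exact nomatch hbk'
        · rename_i hnp
          exact absurd (show p < e + 1 by omega) hnp
      · -- y-arm: contradicts hc'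
        rename_i ky heqy
        have heqy' : t ⟨e + 1, he1⟩ ⟨p, hip2⟩ = TSym.y ky := heqy
        rw [hc'] at heqy'
        exact nomatch heqy'
      · -- fallback arm
        rename_i hnx hny
        exact (hnx _ hc').elim
    · -- else: hxj' : .y kb = .x j
      exact nomatch hxj'
  · -- t(e,p) = .a ja ka
    rename_i ja ka heq
    split at hxj'
    · exact nomatch hxj'
    · rename_i hne
      have hjj : j = ja := (TSym.x.inj hxj').symm
      subst hjj
      exfalso
      split at hbk'
      · -- x-arm: inner scrutinee is t(e,p)=.a, never produces .b
        rename_i jx heqx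
        split at hbk'
        · split at hbk'
          · rename_i j' k' heq2
            have heq2' : t ⟨e, he⟩ ⟨p, hip⟩ = TSym.b j' k' := heq2
            rw [heq] at heq2'
            exact nomatch heq2'
          · split at hbk'
            · exact nomatch hbk'
            · exact nomatch hbk'
        · rename_i hnp
          exact absurd (show p < e + 1 by omega) hnp
      · -- y-arm: the excluded configuration
        rename_i ky heqy
        have heqy' : t ⟨e + 1, he1⟩ ⟨p, hip2⟩ = TSym.y ky := heqy
        have hkey : rankOf t (e + 1) ≤ ky.val ∧ ky = k ∧
            j.val = ky.val - rankOf t (e + 1) := by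
          split at hbk'
          · split at hbk'
            · split at hbk'
              · exact nomatch hbk'
              · split at hbk'
                · rename_i htk
                  obtain ⟨a, b⟩ := TSym.b.inj hbk'
                  exact ⟨htk, b, by rw [← a]⟩
                · exact nomatch hbk'
            · split at hbk'
              · rename_i htk
                obtain ⟨a, b⟩ := TSym.b.inj hbk'
                exact ⟨htk, b, by rw [← a]⟩
              · exact nomatch hbk'
          · split at hbk'
            · rename_i htk
              obtain ⟨a, b⟩ := TSym.b.inj hbk'
              exact ⟨htk, b, by rw [← a]⟩
            · exact nomatch hbk'
        obtain ⟨htk, rfl, hjv⟩ := hkey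
        have hm := hmono ⟨e + 1, he1⟩ (show 1 ≤ e + 1 by omega) p
          (show p + 1 < e + 1 + 1 by omega)
        have hstrict : TSym.lval (rk (e + 2)) (t ⟨e + 1, he1⟩ ⟨p, hip2⟩) <
            TSym.lval (rk (e + 1)) (t ⟨e, he⟩ ⟨p, hip⟩) := hm.2.1 ⟨ky, heqy'⟩
        rw [heqy', heq] at hstrict
        simp only [TSym.lval] at hstrict
        omega
      · -- fallback arm: t(e+1,p) = .b j k, contradicts hxp
        rename_i hnx hny
        rw [hbk'] at hxp
        simp [TSym.isX] at hxp
  · -- fallback arm of hxj' : t(e,p) is an X-symbol, contradicts hvp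
    rename_i hnb hna
    rw [hxj'] at hvp
    simp [TSym.isV] at hvp
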